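/- Fix n ∈ ℕ, ε > 0 and K ≥ 2^n·ε, and let (P, v) be the packing game of the instability construction with weights w. Then every allocation z : P → ℝ in the core of (P, v) (i.e., z(P) = v(P) and z(S) ≥ v(S) for all S ⊆ P) satisfies z(p_i^{(l)}) + z(q_i^{(l)}) = 2·l·K for all l ∈ {1,…,n+2} and i ∈ {1,…,4}. -/

import Mathlib

/-- The players of the instability construction: a root `r`, and players `p i (l)`,
`q i (l)` for levels `l ∈ {1, …, n+2}` (encoded by `Fin (n+2)`, level `= l.1 + 1`) and
`i ∈ {1, …, 4}`. -/
inductive Player (n : ℕ) : Type where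
  | r : Player n
  | p : Fin (n + 2) → Fin 4 → Player n
  | q : Fin (n + 2) → Fin 4 → Player n
  deriving DecidableEq, Fintype

/-- Index set for the family `𝒮` of the instability construction. -/
inductive Idx (n : ℕ) : Type where
  | root : Idx n
  | rootP : Fin 4 → Idx n
  | pair : Fin (n + 2) → Fin 4 → Idx n
  | quad : Fin (n + 1) → Fin 4 → Idx n
  deriving DecidableEq, Fintype

/-- The coalitions of the family `𝒮`: `{r}`; `{r, p_i^{(1)}}`; `{p_i^{(l)}, q_i^{(l)}}`;
and `{q_1^{(l)}, q_2^{(l)}, q_3^{(l)}, q_4^{(l)}, p_i^{(l+1)}}`. -/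
def coal {n : ℕ} : Idx n → Finset (Player n)
  | .root => {Player.r}
  | .rootP i => {Player.r, Player.p 0 i}
  | .pair l i => {Player.p l i, Player.q l i}
  | .quad l i => {Player.q l.castSucc 0, Player.q l.castSucc 1, Player.q l.castSucc 2,
      Player.q l.castSucc 3, Player.p l.succ i}

/-- The weights of the family `𝒮`: `rootW` on `{r}` (which is `1` for `w` and `1 − ε` for
`w̃`); `1` on `{r, p_i^{(1)}}`; `2·l·K` on `{p_i^{(l)}, q_i^{(l)}}`; and `4·l·K` on
`{q_1^{(l)}, …, q_4^{(l)}, p_i^{(l+1)}}`. -/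
noncomputable def wt {n : ℕ} (K rootW : ℝ) : Idx n → ℝ
  | .root => rootW
  | .rootP _ => 1
  | .pair l _ => 2 * ((l.1 : ℝ) + 1) * K
  | .quad l _ => 4 * ((l.1 : ℝ) + 1) * K

/-- The packing game of the instability construction: `packV n K rootW S` is the maximum
total weight of a packing of pairwise disjoint members of `𝒮` inside `S` (the empty
packing is allowed). -/
noncomputable def packV (n : ℕ) (K rootW : ℝ) (S : Finset (Player n)) : ℝ :=
  ((Finset.univ : Finset (Idx n)).powerset.filter (fun F =>
      (∀ j ∈ F, coal j ⊆ S) ∧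
      ∀ j ∈ F, ∀ j' ∈ F, j ≠ j' → Disjoint (coal j) (coal j'))).sup'
    ⟨∅, by simp⟩ (fun F => ∑ j ∈ F, wt K rootW j)

-- dual vector
noncomputable def dualY {n : ℕ} (K : ℝ) : Player n → ℝ
  | .r => 1
  | .p l _ => ((l.1 : ℝ) + 1) * K
  | .q l _ => ((l.1 : ℝ) + 1) * K

lemma dualY_nonneg {n : ℕ} {K : ℝ} (hK : 0 ≤ K) (p : Player n) : 0 ≤ dualY K p := by
  cases p <;> simp [dualY] <;> positivity

lemma wt_le_dual {n : ℕ} {K : ℝ} (hK : 0 ≤ K) (j : Idx n) :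
    wt K 1 j ≤ ∑ p ∈ coal j, dualY K p := by
  cases j with
  | root => simp [coal, wt, dualY]
  | rootP i =>
      rw [show (coal (Idx.rootP i) : Finset (Player n)) = {Player.r, Player.p 0 i} from rfl,
        Finset.sum_pair (by simp)]
      simp [wt, dualY]
      positivity
  | pair l i =>
      rw [show (coal (Idx.pair l i) : Finset (Player n)) = {Player.p l i, Player.q l i} from rfl,
        Finset.sum_pair (by simp)]
      simp [wt, dualY]
      nlinarith [l.2]
  | quad l i =>
      rw [show (coal (Idx.quad l i) : Finset (Player n)) =
        {Player.q l.castSucc 0, Player.q l.castSucc 1, Player.q l.castSucc 2,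
         Player.q l.castSucc 3, Player.p l.succ i} from rfl]
      rw [Finset.sum_insert (by simp [Fin.ext_iff]), Finset.sum_insert (by simp [Fin.ext_iff]),
        Finset.sum_insert (by simp [Fin.ext_iff]), Finset.sum_pair (by simp)]
      simp [wt, dualY, Fin.coe_castSucc, Fin.val_succ]
      nlinarith [l.2]

def F0 (n : ℕ) : Finset (Idx n) :=
  insert Idx.root ((Finset.univ : Finset (Fin (n + 2) × Fin 4)).image fun li => Idx.pair li.1 li.2)

lemma mem_F0 {n : ℕ} {j : Idx n} : j ∈ F0 n ↔ j = .root ∨ ∃ l i, j = .pair l i := by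
  constructor
  · intro h
    rcases Finset.mem_insert.1 h with rfl | h
    · exact Or.inl rfl
    · obtain ⟨⟨l, i⟩, -, rfl⟩ := Finset.mem_image.1 h
      exact Or.inr ⟨l, i, rfl⟩
  · rintro (rfl | ⟨l, i, rfl⟩)
    · exact Finset.mem_insert_self _ _
    · exact Finset.mem_insert_of_mem (Finset.mem_image.2 ⟨(l, i), Finset.mem_univ _, rfl⟩)

lemma F0_disj {n : ℕ} : ∀ j ∈ F0 n, ∀ j' ∈ F0 n, j ≠ j' → Disjoint (coal j) (coal j') := by
  intro j hj j' hj' hne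
  rw [Finset.disjoint_left]
  intro x hx hx'
  rcases mem_F0.1 hj with rfl | ⟨l, i, rfl⟩ <;> rcases mem_F0.1 hj' with rfl | ⟨l', i', rfl⟩ <;>
    simp only [coal, Finset.mem_insert, Finset.mem_singleton] at hx hx'
  · exact hne rfl
  · rcases hx' with rfl | rfl <;> simp_all
  · rcases hx with rfl | rfl <;> simp_all
  · rcases hx with rfl | rfl <;> rcases hx' with h | h <;> first
      | (injection h with h1 h2; exact hne (by rw [h1, h2]))
      | exact absurd h (by simp)

lemma biUnion_F0 (n : ℕ) : (F0 n).biUnion coal = Finset.univ := by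
  ext x
  simp only [Finset.mem_biUnion, Finset.mem_univ, iff_true]
  cases x with
  | r => exact ⟨Idx.root, mem_F0.2 (Or.inl rfl), by simp [coal]⟩
  | p l i => exact ⟨Idx.pair l i, mem_F0.2 (Or.inr ⟨l, i, rfl⟩), by simp [coal]⟩
  | q l i => exact ⟨Idx.pair l i, mem_F0.2 (Or.inr ⟨l, i, rfl⟩), by simp [coal]⟩

lemma sum_F0 {n : ℕ} (g : Player n → ℝ) :
    ∑ j ∈ F0 n, ∑ p ∈ coal j, g p = ∑ p, g p := by
  rw [← biUnion_F0 n, Finset.sum_biUnion]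
  intro j hj j' hj' hne
  exact F0_disj j (Finset.mem_coe.1 hj) j' (Finset.mem_coe.1 hj') hne

lemma wt_eq_F0 {n : ℕ} {K : ℝ} {j : Idx n} (hj : j ∈ F0 n) :
    wt K 1 j = ∑ p ∈ coal j, dualY K p := by
  rcases mem_F0.1 hj with rfl | ⟨l, i, rfl⟩
  · simp [coal, wt, dualY]
  · rw [show (coal (Idx.pair l i) : Finset (Player n)) = {Player.p l i, Player.q l i} from rfl,
      Finset.sum_pair (by simp)]
    simp [wt, dualY]
    ring

lemma le_packV {n : ℕ} (K : ℝ) (S : Finset (Player n)) (F : Finset (Idx n))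
    (h1 : ∀ j ∈ F, coal j ⊆ S)
    (h2 : ∀ j ∈ F, ∀ j' ∈ F, j ≠ j' → Disjoint (coal j) (coal j')) :
    ∑ j ∈ F, wt K 1 j ≤ packV n K 1 S := by
  apply Finset.le_sup' (f := fun F => ∑ j ∈ F, wt K 1 j)
  rw [Finset.mem_filter]
  exact ⟨Finset.mem_powerset.2 (Finset.subset_univ F), h1, h2⟩

lemma packV_le {n : ℕ} {K : ℝ} (hK : 0 ≤ K) :
    packV n K 1 Finset.univ ≤ ∑ p, dualY (n := n) K p := by
  apply Finset.sup'_le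
  intro F hF
  rw [Finset.mem_filter] at hF
  obtain ⟨-, -, h2⟩ := hF
  calc ∑ j ∈ F, wt K 1 j ≤ ∑ j ∈ F, ∑ p ∈ coal j, dualY K p :=
        Finset.sum_le_sum fun j _ => wt_le_dual hK j
    _ = ∑ p ∈ F.biUnion coal, dualY K p :=
        (Finset.sum_biUnion fun j hj j' hj' hne =>
          h2 j (Finset.mem_coe.1 hj) j' (Finset.mem_coe.1 hj') hne).symm
    _ ≤ ∑ p, dualY K p :=
        Finset.sum_le_sum_of_subset_of_nonneg (Finset.subset_univ _)
          fun p _ _ => dualY_nonneg hK p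

/-- Core rigidity in the instability construction: every core allocation `z`
of the packing game `(P, v)` satisfies `z(p_i^{(l)}) + z(q_i^{(l)}) = 2·l·K` for all
levels `l` and all `i`. -/
theorem stmt15 (n : ℕ) (ε K : ℝ) (hε : 0 < ε) (hK : 2 ^ n * ε ≤ K)
    (z : Player n → ℝ)
    (hzP : (∑ p, z p) = packV n K 1 Finset.univ)
    (hzS : ∀ S : Finset (Player n), packV n K 1 S ≤ ∑ p ∈ S, z p) :
    ∀ (l : Fin (n + 2)) (i : Fin 4),
      z (Player.p l i) + z (Player.q l i) = 2 * ((l.1 : ℝ) + 1) * K := by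
  intro l i
  have hK0 : 0 ≤ K := le_trans (by positivity) hK
  have hne : Player.p l i ≠ Player.q l i := by simp
  have hpairmem : Idx.pair l i ∈ F0 n := mem_F0.2 (Or.inr ⟨l, i, rfl⟩)
  -- lower bound
  have hlow : 2 * ((l.1 : ℝ) + 1) * K ≤ z (Player.p l i) + z (Player.q l i) := by
    have h1 : ∑ j ∈ ({Idx.pair l i} : Finset (Idx n)), wt K 1 j ≤
        packV n K 1 (coal (Idx.pair l i)) := by
      apply le_packV
      · intro j hj
        rw [Finset.mem_singleton] at hj
        subst hj; exact subset_rfl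
      · intro j hj j' hj' hne'
        rw [Finset.mem_singleton] at hj hj'
        exact absurd (hj.trans hj'.symm) hne'
    rw [Finset.sum_singleton] at h1
    have h2 := hzS (coal (Idx.pair l i))
    rw [show (coal (Idx.pair l i) : Finset (Player n)) = {Player.p l i, Player.q l i} from rfl,
      Finset.sum_pair hne] at h2
    calc 2 * ((l.1 : ℝ) + 1) * K = wt K 1 (Idx.pair l i) := rfl
      _ ≤ _ := le_trans h1 h2
  -- upper bound
  set S : Finset (Player n) := (Finset.univ.erase (Player.p l i)).erase (Player.q l i) with hS
  set F1 : Finset (Idx n) := (F0 n).erase (Idx.pair l i) with hF1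
  have hsub : ∀ j ∈ F1, coal j ⊆ S := by
    intro j hj x hx
    have hjF0 := Finset.mem_of_mem_erase hj
    have hjne := Finset.ne_of_mem_erase hj
    have hdis := F0_disj j hjF0 _ hpairmem hjne
    have hx' : x ∉ coal (Idx.pair l i) := Finset.disjoint_left.1 hdis hx
    simp only [coal, Finset.mem_insert, Finset.mem_singleton, not_or] at hx'
    rw [hS, Finset.mem_erase, Finset.mem_erase]
    exact ⟨hx'.2, hx'.1, Finset.mem_univ x⟩
  have hdisj : ∀ j ∈ F1, ∀ j' ∈ F1, j ≠ j' → Disjoint (coal j) (coal j') := by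
    intro j hj j' hj' hne'
    exact F0_disj j (Finset.mem_of_mem_erase hj) j' (Finset.mem_of_mem_erase hj') hne'
  have hup : ∑ j ∈ F1, wt K 1 j ≤ ∑ p ∈ S, z p :=
    le_trans (le_packV K S F1 hsub hdisj) (hzS S)
  -- sums
  have hSsum : ∑ p ∈ S, z p = (∑ p, z p) - z (Player.p l i) - z (Player.q l i) := by
    rw [hS, Finset.sum_erase_eq_sub (by
        rw [Finset.mem_erase]; exact ⟨hne.symm, Finset.mem_univ _⟩),
      Finset.sum_erase_eq_sub (Finset.mem_univ _)]
  have hF1sum : ∑ j ∈ F1, wt K 1 j = (∑ j ∈ F0 n, wt K 1 j) - 2 * ((l.1 : ℝ) + 1) * K := by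
    rw [hF1, Finset.sum_erase_eq_sub hpairmem]
    rfl
  have hvle : (∑ p, z p) ≤ ∑ j ∈ F0 n, wt K 1 j := by
    rw [hzP]
    calc packV n K 1 Finset.univ ≤ ∑ p, dualY (n := n) K p := packV_le hK0
      _ = ∑ j ∈ F0 n, ∑ p ∈ coal j, dualY K p := (sum_F0 _).symm
      _ = ∑ j ∈ F0 n, wt K 1 j := by
          exact Finset.sum_congr rfl fun j hj => (wt_eq_F0 hj).symm
  rw [hSsum, hF1sum] at hup
  linarith
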